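/- Let q = 2^ℓ, let a ∈ 𝔽_q with a ≠ 0, let d > 1 be an integer, and let b_1, …, b_d ∈ 𝔽_q with b_d ≠ 0. Then the polynomial (X2 + X4)² + a·(X1 + X3)·(X2 + X4) + (X1 + X3)·Σ_{i=1}^{d} b_i·(X1^i + X3^i) is irreducible in \bar{𝔽}_q[X1, X2, X3, X4], where \bar{𝔽}_q is an algebraic closure of 𝔽_q. -/

import Mathlib

section Aux
open Polynomial Finset

lemma aux_sq_coeff {K : Type*} [Field K] [CharP K 2] (u : K[X]) (n : ℕ) (hn : ¬ 2 ∣ n) :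
    (u ^ 2).coeff n = 0 := by
  rw [← Polynomial.map_frobenius_expand 2 u, Polynomial.coeff_map,
    Polynomial.coeff_expand (by norm_num), if_neg hn, map_zero]

lemma aux_onevar {K : Type*} [Field K] [CharP K 2]
    (a : K) (ha : a ≠ 0) (d : ℕ) (hd : 1 < d) (β : ℕ → K) (hβ : β d ≠ 0)
    (v w : K[X])
    (hvw : v * w = (X ^ 2 + X ^ 3) *
      ∑ i ∈ Finset.Icc 1 d, Polynomial.C (β i) * (X ^ (2 * i) + X ^ (3 * i)))
    (hs : v + w = Polynomial.C a * (X ^ 2 + X ^ 3)) : False := by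
  have h2 : (2 : K[X]) = 0 := by
    have : ((2 : ℕ) : K[X]) = 0 := by
      rw [← Polynomial.C_eq_natCast, CharP.cast_eq_zero K 2, map_zero]
    simpa using this
  set P1 : K[X] := (X ^ 2 + X ^ 3) *
      ∑ i ∈ Finset.Icc 1 d, Polynomial.C (β i) * (X ^ (2 * i) + X ^ (3 * i)) with hP1def
  have hP1 : P1 = ∑ i ∈ Finset.Icc 1 d, Polynomial.C (β i) *
      (X ^ (2 * i + 2) + X ^ (2 * i + 3) + (X ^ (3 * i + 2) + X ^ (3 * i + 3))) := by
    rw [hP1def, Finset.mul_sum]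
    refine Finset.sum_congr rfl fun i _ => ?_
    ring
  have hkey : v ^ 2 + Polynomial.C a * (X ^ 2 + X ^ 3) * v = P1 := by
    rw [hP1def]
    linear_combination v * hs - hvw + (Polynomial.C a * (X ^ 2 + X ^ 3) * v - P1) * h2
  have hv2 : v ^ 2 = P1 + Polynomial.C a * (X ^ 2 + X ^ 3) * v := by
    linear_combination hkey - (Polynomial.C a * (X ^ 2 + X ^ 3) * v) * h2
  obtain ⟨n, hodd, hlb, hub⟩ : ∃ n, ¬ 2 ∣ n ∧ 3 * d + 2 ≤ n ∧ n ≤ 3 * d + 3 := by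
    rcases Nat.even_or_odd d with h | h
    · rw [Nat.even_iff] at h
      exact ⟨3 * d + 3, by omega, by omega, by omega⟩
    · rw [Nat.odd_iff] at h
      exact ⟨3 * d + 2, by omega, by omega, by omega⟩
  have hcoeffP1 : P1.coeff n = β d := by
    rw [hP1, Polynomial.finset_sum_coeff, Finset.sum_eq_single d]
    · simp only [Polynomial.coeff_C_mul, Polynomial.coeff_add, Polynomial.coeff_X_pow]
      rcases (by omega : n = 3 * d + 2 ∨ n = 3 * d + 3) with h | h
      · rw [if_neg (by omega), if_neg (by omega), if_pos (by omega), if_neg (by omega)]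
        norm_num
      · rw [if_neg (by omega), if_neg (by omega), if_neg (by omega), if_pos (by omega)]
        norm_num
    · intro i hi hne
      simp only [Finset.mem_Icc] at hi
      simp only [Polynomial.coeff_C_mul, Polynomial.coeff_add, Polynomial.coeff_X_pow]
      rw [if_neg (by omega), if_neg (by omega), if_neg (by omega), if_neg (by omega)]
      norm_num
    · intro h
      exact absurd (Finset.mem_Icc.mpr ⟨by omega, le_refl d⟩) h
  have hdegP1 : P1.natDegree ≤ 3 * d + 3 := by
    rw [hP1]
    apply Polynomial.natDegree_sum_le_of_forall_le
    intro i hi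
    simp only [Finset.mem_Icc] at hi
    apply le_trans (Polynomial.natDegree_C_mul_le _ _)
    apply le_trans (Polynomial.natDegree_add_le _ _)
    apply max_le
    · apply le_trans (Polynomial.natDegree_add_le _ _)
      simp [Polynomial.natDegree_X_pow]; omega
    · apply le_trans (Polynomial.natDegree_add_le _ _)
      simp [Polynomial.natDegree_X_pow]; omega
  have hWv : (Polynomial.C a * (X ^ 2 + X ^ 3) * v).natDegree ≤ 3 + v.natDegree := by
    apply le_trans (Polynomial.natDegree_mul_le)
    have h3 : (Polynomial.C a * (X ^ 2 + X ^ 3)).natDegree ≤ 3 := by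
      apply le_trans (Polynomial.natDegree_C_mul_le _ _)
      apply le_trans (Polynomial.natDegree_add_le _ _)
      simp [Polynomial.natDegree_X_pow]
    omega
  have hmlt : v.natDegree + 3 < n := by
    rcases le_or_gt v.natDegree 3 with hm | hm
    · omega
    · have hv0 : v ≠ 0 := fun h => by simp [h] at hm
      have h2m : (v ^ 2).natDegree = 2 * v.natDegree :=
        Polynomial.natDegree_pow' (pow_ne_zero _ (Polynomial.leadingCoeff_ne_zero.mpr hv0))
      have hb : (v ^ 2).natDegree ≤ max (3 * d + 3) (3 + v.natDegree) := by
        rw [hv2]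
        exact le_trans (Polynomial.natDegree_add_le _ _) (max_le_max hdegP1 hWv)
      rw [h2m] at hb
      rcases le_max_iff.mp hb with h | h <;> omega
  have hz : P1.coeff n = 0 := by
    have h0 : (v ^ 2).coeff n = 0 := aux_sq_coeff v n hodd
    rw [hv2, Polynomial.coeff_add] at h0
    have h1 : (Polynomial.C a * (X ^ 2 + X ^ 3) * v).coeff n = 0 :=
      Polynomial.coeff_eq_zero_of_natDegree_lt (lt_of_le_of_lt hWv (by omega))
    rw [h1, add_zero] at h0
    exact h0
  rw [hcoeffP1] at hz
  exact hβ hz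


open Polynomial Finset

lemma aux_main {K : Type*} [Field K] [CharP K 2] (a : K) (ha : a ≠ 0) (d : ℕ) (hd : 1 < d)
    (β : ℕ → K) (hβ : β d ≠ 0) :
    Irreducible (((MvPolynomial.X 1 + MvPolynomial.X 3) ^ 2
      + MvPolynomial.C a * (MvPolynomial.X 0 + MvPolynomial.X 2) * (MvPolynomial.X 1 + MvPolynomial.X 3)
      + (MvPolynomial.X 0 + MvPolynomial.X 2) * ∑ i ∈ Finset.Icc 1 d,
          MvPolynomial.C (β i) * (MvPolynomial.X 0 ^ i + MvPolynomial.X 2 ^ i))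
      : MvPolynomial (Fin 4) K) := by
  classical
  set E : MvPolynomial (Fin 4) K ≃ₐ[K] Polynomial (MvPolynomial (Fin 3) K) :=
    (MvPolynomial.renameEquiv K (finRotate 4)).trans (MvPolynomial.finSuccEquiv K 3) with hE
  have hE0 : E (MvPolynomial.X 0) = Polynomial.C (MvPolynomial.X 0) := by
    rw [hE, AlgEquiv.trans_apply, MvPolynomial.renameEquiv_apply, MvPolynomial.rename_X,
      show finRotate 4 (0 : Fin 4) = Fin.succ 0 from by decide, MvPolynomial.finSuccEquiv_X_succ]
  have hE1 : E (MvPolynomial.X 1) = Polynomial.C (MvPolynomial.X 1) := by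
    rw [hE, AlgEquiv.trans_apply, MvPolynomial.renameEquiv_apply, MvPolynomial.rename_X,
      show finRotate 4 (1 : Fin 4) = Fin.succ 1 from by decide, MvPolynomial.finSuccEquiv_X_succ]
  have hE2 : E (MvPolynomial.X 2) = Polynomial.C (MvPolynomial.X 2) := by
    rw [hE, AlgEquiv.trans_apply, MvPolynomial.renameEquiv_apply, MvPolynomial.rename_X,
      show finRotate 4 (2 : Fin 4) = Fin.succ 2 from by decide, MvPolynomial.finSuccEquiv_X_succ]
  have hE3 : E (MvPolynomial.X 3) = Polynomial.X := by
    rw [hE, AlgEquiv.trans_apply, MvPolynomial.renameEquiv_apply, MvPolynomial.rename_X,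
      show finRotate 4 (3 : Fin 4) = (0 : Fin 4) from by decide, MvPolynomial.finSuccEquiv_X_zero]
  have hEC : ∀ x : K, E (MvPolynomial.C x) = Polynomial.C (MvPolynomial.C x) := by
    intro x
    rw [show (MvPolynomial.C x : MvPolynomial (Fin 4) K) = algebraMap K _ x from rfl,
      AlgEquiv.commutes]
    rfl
  set S3 : MvPolynomial (Fin 3) K := ∑ i ∈ Finset.Icc 1 d,
      MvPolynomial.C (β i) * (MvPolynomial.X 0 ^ i + MvPolynomial.X 2 ^ i) with hS3
  set A : MvPolynomial (Fin 3) K :=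
      MvPolynomial.C a * (MvPolynomial.X 0 + MvPolynomial.X 2) + 2 * MvPolynomial.X 1 with hA
  set B : MvPolynomial (Fin 3) K := MvPolynomial.X 1 ^ 2
      + MvPolynomial.C a * (MvPolynomial.X 0 + MvPolynomial.X 2) * MvPolynomial.X 1
      + (MvPolynomial.X 0 + MvPolynomial.X 2) * S3 with hB
  have hEP : E ((MvPolynomial.X 1 + MvPolynomial.X 3) ^ 2
      + MvPolynomial.C a * (MvPolynomial.X 0 + MvPolynomial.X 2) * (MvPolynomial.X 1 + MvPolynomial.X 3)
      + (MvPolynomial.X 0 + MvPolynomial.X 2) * ∑ i ∈ Finset.Icc 1 d,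
          MvPolynomial.C (β i) * (MvPolynomial.X 0 ^ i + MvPolynomial.X 2 ^ i))
      = Polynomial.X ^ 2 + Polynomial.C A * Polynomial.X + Polynomial.C B := by
    simp only [hA, hB, hS3, map_add, map_mul, map_pow, map_sum, map_ofNat,
      hE0, hE1, hE2, hE3, hEC]
    ring
  rw [← MulEquiv.irreducible_iff E, hEP]
  -- now prove irreducibility of the quadratic
  have hmon : (Polynomial.X ^ 2 + Polynomial.C A * Polynomial.X + Polynomial.C B).Monic := by
    rw [add_assoc]
    exact Polynomial.monic_X_pow_add
      (lt_of_le_of_lt Polynomial.degree_linear_le (by exact_mod_cast one_lt_two))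
  have hnd : (Polynomial.X ^ 2 + Polynomial.C A * Polynomial.X + Polynomial.C B).natDegree = 2 := by
    rw [show (Polynomial.X ^ 2 : Polynomial (MvPolynomial (Fin 3) K))
        = Polynomial.C 1 * Polynomial.X ^ 2 by rw [map_one, one_mul]]
    exact Polynomial.natDegree_quadratic one_ne_zero
  by_contra hni
  obtain ⟨c₁, c₂, h0, h1⟩ := (hmon.not_irreducible_iff_exists_add_mul_eq_coeff hnd).mp hni
  have hc0 : (Polynomial.X ^ 2 + Polynomial.C A * Polynomial.X + Polynomial.C B).coeff 0 = B := by
    simp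
  have hc1 : (Polynomial.X ^ 2 + Polynomial.C A * Polynomial.X + Polynomial.C B).coeff 1 = A := by
    simp
  rw [hc0] at h0
  rw [hc1] at h1
  set φ : MvPolynomial (Fin 3) K →ₐ[K] Polynomial K :=
    MvPolynomial.aeval ![Polynomial.X ^ 2, 0, Polynomial.X ^ 3] with hφ
  have hφ0 : φ (MvPolynomial.X 0) = Polynomial.X ^ 2 := by simp [hφ]
  have hφ1 : φ (MvPolynomial.X 1) = 0 := by simp [hφ]
  have hφ2 : φ (MvPolynomial.X 2) = Polynomial.X ^ 3 := by simp [hφ]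
  have hφC : ∀ x : K, φ (MvPolynomial.C x) = Polynomial.C x := by
    intro x
    simp [hφ, MvPolynomial.algebraMap_eq]
  have hB' : φ c₁ * φ c₂ = (Polynomial.X ^ 2 + Polynomial.X ^ 3) *
      ∑ i ∈ Finset.Icc 1 d, Polynomial.C (β i) *
        (Polynomial.X ^ (2 * i) + Polynomial.X ^ (3 * i)) := by
    rw [← map_mul, ← h0]
    simp only [hB, hS3, map_add, map_mul, map_pow, map_sum, hφ0, hφ1, hφ2, hφC, ← pow_mul]
    ring
  have hA' : φ c₁ + φ c₂ = Polynomial.C a * (Polynomial.X ^ 2 + Polynomial.X ^ 3) := by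
    rw [← map_add, ← h1]
    simp only [hA, map_add, map_mul, map_ofNat, hφ0, hφ1, hφ2, hφC]
    ring
  exact aux_onevar a ha d hd β hβ (φ c₁) (φ c₂) hB' hA'

end Aux

open MvPolynomial Finset in
/-- Variables: `X 0 = X1`, `X 1 = X2`, `X 2 = X3`, `X 3 = X4`. -/
theorem stmt_18
    (ℓ : ℕ) (hℓ : 0 < ℓ)
    (F : Type) [Field F] [Fintype F] [CharP F 2]
    (hcard : Fintype.card F = 2 ^ ℓ)
    (a : F) (ha : a ≠ 0) (d : ℕ) (hd : 1 < d)
    (b : ℕ → F) (hbd : b d ≠ 0) :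
    Irreducible
      (((X 1 + X 3) ^ 2
        + C (algebraMap F (AlgebraicClosure F) a) * (X 0 + X 2) * (X 1 + X 3)
        + (X 0 + X 2) * ∑ i ∈ Finset.Icc 1 d,
            C (algebraMap F (AlgebraicClosure F) (b i)) * (X 0 ^ i + X 2 ^ i))
        : MvPolynomial (Fin 4) (AlgebraicClosure F)) :=
  aux_main (algebraMap F (AlgebraicClosure F) a)
    (by simpa using (RingHom.injective (algebraMap F (AlgebraicClosure F))).ne ha) d hd
    (fun i => algebraMap F (AlgebraicClosure F) (b i))
    (by simpa using (RingHom.injective (algebraMap F (AlgebraicClosure F))).ne hbd)
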